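/- Every surjective endomorphism of a finitely generated free group is an isomorphism (finitely generated free groups are Hopfian). -/

import Mathlib

namespace FGHopf

variable {α : Type*} [DecidableEq α]

/-- In a reduced word, no adjacent cancelling pair. -/
lemma no_cancel {L : List (α × Bool)} (hL : FreeGroup.reduce L = L)
    {i : ℕ} {a : α} {b : Bool} (h1 : L[i]? = some (a, b)) (h2 : L[i+1]? = some (a, !b)) :
    False := by
  rw [List.getElem?_eq_some_iff] at h1 h2
  obtain ⟨hi1, e1⟩ := h1
  obtain ⟨hi2, e2⟩ := h2
  have hdec : L = L.take i ++ (a, b) :: (a, !b) :: L.drop (i + 2) := by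
    conv_lhs => rw [← List.take_append_drop i L]
    congr 1
    rw [List.drop_eq_getElem_cons hi1, e1]
    congr 1
    rw [List.drop_eq_getElem_cons hi2, e2]
  exact FreeGroup.reduce.not (hL.trans hdec)

variable (L : List (α × Bool)) (a : α)

/-- sources of the permutation moves -/
def P (j : Fin (L.length + 1)) : Prop :=
  L[(j : ℕ)]? = some (a, false) ∨ (0 < (j : ℕ) ∧ L[(j : ℕ) - 1]? = some (a, true))

/-- targets of the permutation moves -/
def Q (j : Fin (L.length + 1)) : Prop :=
  (0 < (j : ℕ) ∧ L[(j : ℕ) - 1]? = some (a, false)) ∨ L[(j : ℕ)]? = some (a, true)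

instance : DecidablePred (P L a) := fun _ => by unfold P; infer_instance
instance : DecidablePred (Q L a) := fun _ => by unfold Q; infer_instance

lemma lt_of_some {j : ℕ} {u : α × Bool} (h : L[j]? = some u) : j < L.length :=
  (List.getElem?_eq_some_iff.mp h).1

variable (hL : FreeGroup.reduce L = L)

/-- the matching between sources and targets -/
def E : { j // P L a j } ≃ { j // Q L a j } where
  toFun := fun ⟨j, h⟩ =>
    if hc : L[(j : ℕ)]? = some (a, false) then
      ⟨⟨(j : ℕ) + 1, by have := lt_of_some L hc; omega⟩, Or.inl ⟨Nat.succ_pos _, by simpa using hc⟩⟩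
    else
      ⟨⟨(j : ℕ) - 1, by omega⟩, Or.inr (by
        rcases h with h | ⟨h0, h1⟩
        · exact absurd h hc
        · simpa using h1)⟩
  invFun := fun ⟨j, h⟩ =>
    if hc : 0 < (j : ℕ) ∧ L[(j : ℕ) - 1]? = some (a, false) then
      ⟨⟨(j : ℕ) - 1, by omega⟩, Or.inl (by simpa using hc.2)⟩
    else
      ⟨⟨(j : ℕ) + 1, by
          rcases h with h | h
          · exact absurd h hc
          · have := lt_of_some L h; omega⟩, Or.inr ⟨Nat.succ_pos _, by
          rcases h with h | h
          · exact absurd h hc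
          · simpa using h⟩⟩
  left_inv := fun ⟨j, h⟩ => by
    by_cases hc : L[(j : ℕ)]? = some (a, false)
    · simp only [hc, dif_pos]
      have : ¬ (0 < ((j : ℕ) + 1) ∧ L[((j : ℕ) + 1) - 1]? = some (a, false)) → False := by
        intro hb; exact hb ⟨Nat.succ_pos _, by simpa using hc⟩
      rw [dif_pos ⟨Nat.succ_pos _, by simpa using hc⟩]
      ext <;> simp
    · simp only [hc, dif_neg, not_false_iff]
      rcases h with h | ⟨h0, h1⟩
      · exact absurd h hc
      · have hcond : ¬ (0 < ((j : ℕ) - 1) ∧ L[((j : ℕ) - 1) - 1]? = some (a, false)) := by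
          rintro ⟨hp, he⟩
          exact no_cancel hL (b := false) he (by
            have : (j : ℕ) - 1 - 1 + 1 = (j : ℕ) - 1 := by omega
            rw [this]; simpa using h1)
        rw [dif_neg hcond]
        ext <;> simp <;> omega
  right_inv := fun ⟨j, h⟩ => by
    by_cases hc : 0 < (j : ℕ) ∧ L[(j : ℕ) - 1]? = some (a, false)
    · simp only [hc, dif_pos]
      rw [dif_pos (by simpa using hc.2)]
      ext <;> simp <;> omega
    · simp only [hc, dif_neg, not_false_iff]
      rcases h with h | h
      · exact absurd h hc
      · have hcond : ¬ (L[((j : ℕ) + 1)]? = some (a, false)) := by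
          intro he
          exact no_cancel hL (b := true) h (by simpa using he)
        rw [dif_neg hcond]
        ext <;> simp
/-- the permutation associated to generator `a` -/
noncomputable def sigma : Equiv.Perm (Fin (L.length + 1)) :=
  (Equiv.sumCompl (P L a)).symm.trans
    (((E L a hL).sumCongr
      (Fintype.equivOfCardEq (by
        rw [Fintype.card_subtype_compl, Fintype.card_subtype_compl,
          Fintype.card_congr (E L a hL)]))).trans
      (Equiv.sumCompl (Q L a)))

lemma sigma_apply_pos (j : Fin (L.length + 1)) (hp : P L a j) :
    sigma L a hL j = ((E L a hL ⟨j, hp⟩ : { j // Q L a j }) : Fin (L.length + 1)) := by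
  simp only [sigma, Equiv.trans_apply, Equiv.sumCompl_symm_apply_of_pos hp,
    Equiv.sumCongr_apply, Sum.map_inl, Equiv.sumCompl_apply_inl]

lemma sigma_of_ff (j : Fin (L.length + 1)) (hj : L[(j : ℕ)]? = some (a, false)) :
    sigma L a hL j = ⟨(j : ℕ) + 1, by have := lt_of_some L hj; omega⟩ := by
  rw [sigma_apply_pos L a hL j (Or.inl hj)]
  simp only [E, Equiv.coe_fn_mk, dif_pos hj]

lemma sigma_of_tt (j : ℕ) (hj : L[j]? = some (a, true)) :
    sigma L a hL ⟨j + 1, by have := lt_of_some L hj; omega⟩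
      = ⟨j, by have := lt_of_some L hj; omega⟩ := by
  have hp : P L a ⟨j + 1, by have := lt_of_some L hj; omega⟩ :=
    Or.inr ⟨Nat.succ_pos _, by simpa using hj⟩
  rw [sigma_apply_pos L a hL _ hp]
  have hc : ¬ (L[j + 1]? = some (a, false)) := fun he =>
    no_cancel hL (b := true) hj (by simpa using he)
  simp only [E, Equiv.coe_fn_mk, dif_neg hc]
  simp

/-- the factor of the product corresponding to a letter -/
lemma factor_apply (j : ℕ) (l : α × Bool) (hj : L[j]? = some l) :
    (cond l.2 (sigma L l.1 hL) (sigma L l.1 hL)⁻¹)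
        ⟨j + 1, by have := lt_of_some L hj; omega⟩
      = ⟨j, by have := lt_of_some L hj; omega⟩ := by
  obtain ⟨a, b⟩ := l
  cases b
  · simp only [cond_false]
    have := sigma_of_ff L a hL ⟨j, by have := lt_of_some L hj; omega⟩ (by simpa using hj)
    rw [← this]; exact (sigma L a hL).symm_apply_apply _
  · simpa using sigma_of_tt L a hL j hj

lemma suffix_prod (k : ℕ) : ∀ j, ∀ _ : j + k = L.length,
    (((L.drop j).map (fun l => cond l.2 (sigma L l.1 hL) (sigma L l.1 hL)⁻¹)).prod)
        ⟨L.length, Nat.lt_succ_self _⟩ = ⟨j, by omega⟩ := by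
  induction k with
  | zero =>
    intro j hj
    have hd : L.drop j = [] := List.drop_eq_nil_of_le (by omega)
    rw [hd]
    simp only [List.map_nil, List.prod_nil, Equiv.Perm.one_apply]
    simp only [Fin.mk.injEq]
    omega
  | succ k ih =>
    intro j hj
    have hjlt : j < L.length := by omega
    rw [List.drop_eq_getElem_cons hjlt, List.map_cons, List.prod_cons, Equiv.Perm.mul_apply,
      ih (j + 1) (by omega)]
    exact factor_apply L hL j L[j] (List.getElem?_eq_getElem hjlt)

/-- Free groups are residually finite: any nontrivial element survives in some
finite symmetric group. -/
lemma separate (x : FreeGroup α) (hx : x ≠ 1) :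
    ∃ (m : ℕ) (φ : FreeGroup α →* Equiv.Perm (Fin m)), φ x ≠ 1 := by
  set L := x.toWord with hLdef
  have hL : FreeGroup.reduce L = L := FreeGroup.reduce_toWord x
  have hne : L ≠ [] := by
    intro h
    apply hx
    have := FreeGroup.mk_toWord (x := x)
    rw [← this, ← hLdef, h]
    rfl
  refine ⟨L.length + 1, FreeGroup.lift (fun a => sigma L a hL), ?_⟩
  intro h1
  have hx' : FreeGroup.lift (fun a => sigma L a hL) (FreeGroup.mk L) = 1 := by
    rw [show FreeGroup.mk L = x from FreeGroup.mk_toWord]; exact h1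
  rw [FreeGroup.lift_mk] at hx'
  have := suffix_prod L hL L.length 0 (by omega)
  rw [List.drop_zero] at this
  rw [hx'] at this
  have h0 : L.length = 0 := by
    have := Fin.mk.injEq _ _ _ _ ▸ this
    simpa using this
  exact hne (List.length_eq_zero_iff.mp h0)

end FGHopf

/-- Finitely generated free groups are Hopfian: every surjective endomorphism is injective
(hence an isomorphism). -/
theorem freeGroup_hopfian
    (α : Type*) [Finite α] (f : FreeGroup α →* FreeGroup α)
    (hf : Function.Surjective f) : Function.Injective f := by
  classical
  rw [injective_iff_map_eq_one f]
  intro x hfx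
  by_contra hx
  obtain ⟨m, φ, hφ⟩ := FGHopf.separate x hx
  haveI : Fintype α := Fintype.ofFinite α
  haveI : Finite (FreeGroup α →* Equiv.Perm (Fin m)) :=
    Finite.of_surjective (FreeGroup.lift : (α → Equiv.Perm (Fin m)) ≃ _)
      (FreeGroup.lift : (α → Equiv.Perm (Fin m)) ≃ _).surjective
  have hT : Function.Injective
      (fun ψ : FreeGroup α →* Equiv.Perm (Fin m) => ψ.comp f) := by
    intro ψ₁ ψ₂ h
    exact (MonoidHom.cancel_right hf).mp h
  obtain ⟨ψ, hψ⟩ := Finite.surjective_of_injective hT φ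
  apply hφ
  rw [← hψ]
  simp only [MonoidHom.comp_apply, hfx, map_one]
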